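/- The probability that a sequence of three BFB folds follows representative sequence [1,1,2] given prefix [1,1] equals (1/2)·log 2; i.e., ∫∫_{0<x_2<x_1<1} (x_1/(4x_1 − 2x_2)) · (1/x_1) dx_1 dx_2 = (1/2) log 2. -/

import Mathlib

open intervalIntegral

lemma inner_eval {x₁ : ℝ} (hx : 0 < x₁) :
    (∫ x₂ in (0:ℝ)..x₁, x₁ / (4 * x₁ - 2 * x₂) * (1 / x₁)) = Real.log 2 / 2 := by
  have hsimp : ∀ x₂ : ℝ, x₁ / (4 * x₁ - 2 * x₂) * (1 / x₁) = (4 * x₁ - 2 * x₂)⁻¹ := by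
    intro x₂
    rcases eq_or_ne (4 * x₁ - 2 * x₂) 0 with h | h
    · simp [h]
    · field_simp
  simp_rw [hsimp]
  have hpos : ∀ x₂ ∈ Set.uIcc (0:ℝ) x₁, 0 < 4 * x₁ - 2 * x₂ := by
    intro x₂ hx₂
    rw [Set.uIcc_of_le hx.le] at hx₂
    nlinarith [hx₂.1, hx₂.2]
  have hderiv : ∀ x₂ ∈ Set.uIcc (0:ℝ) x₁,
      HasDerivAt (fun y => -(Real.log (4 * x₁ - 2 * y)) / 2) ((4 * x₁ - 2 * x₂)⁻¹) x₂ := by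
    intro x₂ hx₂
    have h1 : HasDerivAt (fun y : ℝ => 4 * x₁ - 2 * y) (-2) x₂ := by
      simpa using ((hasDerivAt_id x₂).const_mul (2:ℝ)).const_sub (4 * x₁)
    have h2 := (h1.log (hpos x₂ hx₂).ne').neg.div_const 2
    rw [show ((4 * x₁ - 2 * x₂)⁻¹ : ℝ) = -(-2 / (4 * x₁ - 2 * x₂)) / 2 by ring]
    have hA := (hpos x₂ hx₂).ne'
    exact h2
  have hcont : IntervalIntegrable (fun x₂ => (4 * x₁ - 2 * x₂)⁻¹) MeasureTheory.volume 0 x₁ := by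
    apply ContinuousOn.intervalIntegrable
    exact (continuousOn_const.sub (continuousOn_const.mul continuousOn_id)).inv₀
      fun x hx' => (hpos x hx').ne'
  rw [intervalIntegral.integral_eq_sub_of_hasDerivAt hderiv hcont]
  have h4 : 4 * x₁ - 2 * x₁ = 2 * x₁ := by ring
  have h2 : (4 : ℝ) * x₁ = 2 * (2 * x₁) := by ring
  have hlog : Real.log (4 * x₁) = Real.log 2 + Real.log (2 * x₁) := by
    rw [h2, Real.log_mul (by norm_num) (by positivity)]
  rw [show (4:ℝ) * x₁ - 2 * 0 = 4 * x₁ by ring, h4, hlog]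
  ring

/-- The probability of BFB sequence `[1,1,2]` given prefix `[1,1]`:
`∫₀¹ ∫₀^{x₁} (x₁ / (4x₁ − 2x₂)) · (1/x₁) dx₂ dx₁ = (1/2) log 2`. -/
theorem bfb_112_probability :
    (∫ x₁ in (0:ℝ)..1, ∫ x₂ in (0:ℝ)..x₁,
        x₁ / (4 * x₁ - 2 * x₂) * (1 / x₁)) = Real.log 2 / 2 := by
  have : (∫ x₁ in (0:ℝ)..1, ∫ x₂ in (0:ℝ)..x₁,
      x₁ / (4 * x₁ - 2 * x₂) * (1 / x₁)) = ∫ _x₁ in (0:ℝ)..1, Real.log 2 / 2 := by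
    apply intervalIntegral.integral_congr_ae
    filter_upwards with x₁ hx₁
    rw [Set.uIoc_of_le (by norm_num : (0:ℝ) ≤ 1)] at hx₁
    exact inner_eval hx₁.1
  rw [this]
  simp
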